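/- Let S(p_s, r_s) be a solid sphere and C(p_c, r_c, l_c) a solid cylinder in ℝ³ with X = (p_s − p_c)·l_c/‖l_c‖. If |X| > ‖l_c‖ + r_s, then S and C intersect (have a common point) if and only if the cylinder is entirely contained in the sphere, which happens if and only if ‖p_c − p_s‖ + √(‖l_c‖² + r_c²) ≤ r_s; in particular if |X| > ‖l_c‖ + r_s then S ∩ C = ∅. -/

import Mathlib

open scoped RealInnerProductSpace
noncomputable section

/-- ℝ³ as a Euclidean space. -/
abbrev E3 := EuclideanSpace ℝ (Fin 3)

/-- Cross product in ℝ³. -/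
def cross3 (a b : E3) : E3 :=
  WithLp.toLp 2 ![a 1 * b 2 - a 2 * b 1, a 2 * b 0 - a 0 * b 2, a 0 * b 1 - a 1 * b 0]

/-- The line through `p` with direction `d`. -/
def lineThrough (p d : E3) : Set E3 := {x | ∃ t : ℝ, x = p + t • d}

/-- Solid sphere with center `p` and radius `r`. -/
def sphereS (p : E3) (r : ℝ) : Set E3 := Metric.closedBall p r

/-- Solid finite cylinder with center `p`, radius `r` and half-axis vector `l`. -/
def cylS (p : E3) (r : ℝ) (l : E3) : Set E3 :=
  {x | |⟪x - p, l⟫| ≤ ‖l‖ ^ 2 ∧ Metric.infDist x (lineThrough p l) ≤ r}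

/-- If the sphere center is axially far from the cylinder, the only possible intersection
is total containment of the cylinder in the sphere; in particular they are disjoint. -/
theorem sphere_cylinder_far_axial
    (p_s p_c l_c : E3) (r_s r_c : ℝ) (hl : l_c ≠ 0) (hrs : 0 < r_s) (hrc : 0 < r_c)
    (hX : |⟪p_s - p_c, l_c⟫ / ‖l_c‖| > ‖l_c‖ + r_s) :
    ((sphereS p_s r_s ∩ cylS p_c r_c l_c).Nonempty ↔ cylS p_c r_c l_c ⊆ sphereS p_s r_s) ∧
    (cylS p_c r_c l_c ⊆ sphereS p_s r_s ↔
      ‖p_c - p_s‖ + Real.sqrt (‖l_c‖ ^ 2 + r_c ^ 2) ≤ r_s) ∧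
    sphereS p_s r_s ∩ cylS p_c r_c l_c = ∅ := by
  have hln : (0:ℝ) < ‖l_c‖ := norm_pos_iff.mpr hl
  -- Disjointness
  have hempty : sphereS p_s r_s ∩ cylS p_c r_c l_c = ∅ := by
    by_contra h
    obtain ⟨x, hxs, hxc⟩ := Set.nonempty_iff_ne_empty.mpr h
    have hxs' : ‖x - p_s‖ ≤ r_s := by
      simpa [sphereS, Metric.mem_closedBall, dist_eq_norm] using hxs
    have h1 : |⟪p_s - x, l_c⟫| ≤ r_s * ‖l_c‖ := by
      calc |⟪p_s - x, l_c⟫| ≤ ‖p_s - x‖ * ‖l_c‖ := abs_real_inner_le_norm _ _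
        _ ≤ r_s * ‖l_c‖ := by
            have : ‖p_s - x‖ = ‖x - p_s‖ := norm_sub_rev _ _
            nlinarith
    have h2 : |⟪x - p_c, l_c⟫| ≤ ‖l_c‖ ^ 2 := hxc.1
    have hsum : ⟪p_s - p_c, l_c⟫ = ⟪p_s - x, l_c⟫ + ⟪x - p_c, l_c⟫ := by
      rw [← inner_add_left]; congr 1; abel
    have h3 : |⟪p_s - p_c, l_c⟫| ≤ r_s * ‖l_c‖ + ‖l_c‖ ^ 2 := by
      rw [hsum]
      exact le_trans (abs_add_le _ _) (add_le_add h1 h2)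
    have h4 : |⟪p_s - p_c, l_c⟫ / ‖l_c‖| ≤ ‖l_c‖ + r_s := by
      rw [abs_div, abs_of_pos hln, div_le_iff₀ hln]
      nlinarith
    linarith [hX]
  -- cylinder contains its center
  have hpc : p_c ∈ cylS p_c r_c l_c := by
    constructor
    · simpa using sq_nonneg ‖l_c‖
    · have : p_c ∈ lineThrough p_c l_c := ⟨0, by simp⟩
      have := Metric.infDist_zero_of_mem this
      simp [this, hrc.le]
  have hnotsub : ¬ cylS p_c r_c l_c ⊆ sphereS p_s r_s := by
    intro h
    have : p_c ∈ sphereS p_s r_s ∩ cylS p_c r_c l_c := ⟨h hpc, hpc⟩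
    rw [hempty] at this
    exact this
  have hnotnonempty : ¬ (sphereS p_s r_s ∩ cylS p_c r_c l_c).Nonempty := by
    rw [hempty]; exact Set.not_nonempty_empty
  -- distance inequality fails
  have hdist : ¬ (‖p_c - p_s‖ + Real.sqrt (‖l_c‖ ^ 2 + r_c ^ 2) ≤ r_s) := by
    intro h
    have hCS : |⟪p_s - p_c, l_c⟫| ≤ ‖p_s - p_c‖ * ‖l_c‖ := abs_real_inner_le_norm _ _
    have hXle : |⟪p_s - p_c, l_c⟫ / ‖l_c‖| ≤ ‖p_s - p_c‖ := by
      rw [abs_div, abs_of_pos hln, div_le_iff₀ hln]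
      exact hCS
    have hrev : ‖p_c - p_s‖ = ‖p_s - p_c‖ := norm_sub_rev _ _
    have hsq : (0:ℝ) ≤ Real.sqrt (‖l_c‖ ^ 2 + r_c ^ 2) := Real.sqrt_nonneg _
    linarith
  refine ⟨⟨fun h => absurd h hnotnonempty, fun h => absurd h hnotsub⟩,
    ⟨fun h => absurd h hnotsub, fun h => absurd h hdist⟩, hempty⟩
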